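/- Let E = ℝ^d with the Euclidean norm ‖·‖_2, let W ⊆ ℝ^d be nonempty compact convex with diameter D, let f_1,…,f_T : W → ℝ be convex functions, let w_1,…,w_T ∈ W, and let g_t be a subgradient of f_t at w_t for each t. Let P be the passed rounds of the Top-k Filter with parameter k applied to g_1,…,g_T. Suppose the predictions satisfy the adaptive online gradient descent guarantee on the passed rounds: for every u ∈ W, Σ_{t∈P} ⟨w_t − u, g_t⟩ ≤ 2D·√(Σ_{t∈P} ‖g_t‖_2²). Then for every S ⊆ [T] with T − |S| ≤ k and every u ∈ W, the robust regret satisfies Σ_{t∈S} (f_t(w_t) − f_t(u)) ≤ 2D·√(Σ_{t∈S} ‖g_t‖_2²) + 2D·G(S)·(2k + √k + 2) ≤ 2D·G(S)·(√T + 2k + √k + 2). -/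

import Mathlib

/-!
Top-k Filter in Euclidean space: rounds are indexed `0, 1, …, T-1`.  For round `t`,
`topkThresh g k t` is the `(k+1)`-th largest value among `‖g 0‖₂, …, ‖g t‖₂`
(`0` if fewer than `k+1` values are available).  Round `t` is passed iff
`‖g t‖₂ ≤ 2 * topkThresh g k t`.
-/

/-- The `(k+1)`-th largest element of a list of reals (`0` if the list has fewer
than `k+1` elements). -/
noncomputable def kthLargest (k : ℕ) (l : List ℝ) : ℝ :=
  (l.mergeSort (fun a b => decide (b ≤ a))).getD k 0

section KthLargest

variable {k : ℕ} {l : List ℝ} {c : ℝ}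

private lemma kth_sorted (l : List ℝ) :
    (l.mergeSort (fun a b => decide (b ≤ a))).Pairwise (fun a b => b ≤ a) := by
  have h := List.pairwise_mergeSort (le := fun a b : ℝ => decide (b ≤ a))
    (fun a b c hab hbc => by simp only [decide_eq_true_iff] at *; linarith)
    (fun a b => by simp only [Bool.or_eq_true, decide_eq_true_iff]; exact le_total b a) l
  exact h.imp (by simp)

private lemma kth_sorted_le {l' : List ℝ} (hs : l'.Pairwise (fun a b => b ≤ a))
    {i j : ℕ} (hij : i ≤ j) (hj : j < l'.length) : l'[j] ≤ l'[i] := by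
  rcases eq_or_lt_of_le hij with rfl | hlt
  · exact le_refl _
  · exact (List.pairwise_iff_get.1 hs) ⟨i, lt_of_le_of_lt hij hj⟩ ⟨j, hj⟩ hlt

lemma kthLargest_nonneg (h : ∀ x ∈ l, 0 ≤ x) : 0 ≤ kthLargest k l := by
  unfold kthLargest
  set l' := l.mergeSort (fun a b => decide (b ≤ a)) with hl'
  by_cases hk : k < l'.length
  · rw [List.getD_eq_getElem l' 0 hk]
    exact h _ ((List.mergeSort_perm l _).mem_iff.1 (l'.getElem_mem hk))
  · rw [List.getD_eq_default l' 0 (not_lt.1 hk)]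

lemma kthLargest_eq_zero (h : l.length ≤ k) : kthLargest k l = 0 := by
  unfold kthLargest
  exact List.getD_eq_default _ 0 (by rwa [List.length_mergeSort])

lemma kthLargest_le (hc : 0 ≤ c) (h : l.countP (fun x => decide (c < x)) ≤ k) :
    kthLargest k l ≤ c := by
  unfold kthLargest
  set l' := l.mergeSort (fun a b => decide (b ≤ a)) with hl'
  have hLL : l'.length = l.length := List.length_mergeSort l
  by_cases hk : k < l'.length
  · rw [List.getD_eq_getElem l' 0 hk]
    by_contra hgt
    push_neg at hgt
    have hcount : (l'.take (k+1)).countP (fun x => decide (c < x)) = (l'.take (k+1)).length := by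
      rw [List.countP_eq_length]
      intro a ha
      rw [List.mem_take_iff_getElem] at ha
      obtain ⟨i, hi, rfl⟩ := ha
      rw [lt_min_iff] at hi
      simp only [decide_eq_true_iff]
      exact lt_of_lt_of_le hgt (kth_sorted_le (kth_sorted l) (by omega)
        (by rw [List.length_mergeSort]; omega))
    have hlt : (l'.take (k+1)).length = k+1 := by rw [List.length_take]; omega
    have h1 : (k+1 : ℕ) ≤ l'.countP (fun x => decide (c < x)) := by
      rw [← hlt, ← hcount]; exact (List.take_sublist _ _).countP_le
    rw [((List.mergeSort_perm l _).countP_eq _)] at h1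
    omega
  · rw [List.getD_eq_default l' 0 (not_lt.1 hk)]; exact hc

lemma le_kthLargest (h : k + 1 ≤ l.countP (fun x => decide (c ≤ x))) :
    c ≤ kthLargest k l := by
  unfold kthLargest
  set l' := l.mergeSort (fun a b => decide (b ≤ a)) with hl'
  have hLL : l'.length = l.length := List.length_mergeSort l
  have hcount : l'.countP (fun x => decide (c ≤ x)) = l.countP (fun x => decide (c ≤ x)) :=
    (List.mergeSort_perm l _).countP_eq _
  have hcl : l.countP (fun x => decide (c ≤ x)) ≤ l.length := List.countP_le_length
  have hlen : k < l'.length := by omega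
  rw [List.getD_eq_getElem l' 0 hlen]
  by_contra hlt
  push_neg at hlt
  have hdrop : (l'.drop k).countP (fun x => decide (c ≤ x)) = 0 := by
    rw [List.countP_eq_zero]
    intro a ha
    rw [List.mem_iff_getElem] at ha
    obtain ⟨i, hi, rfl⟩ := ha
    simp only [decide_eq_true_iff, not_le]
    rw [List.getElem_drop]
    have hki : k + i < l'.length := by rw [List.length_drop] at hi; omega
    exact lt_of_le_of_lt (kth_sorted_le (kth_sorted l) (by omega) hki) hlt
  have htake : (l'.take k).countP (fun x => decide (c ≤ x)) ≤ k := by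
    calc (l'.take k).countP _ ≤ (l'.take k).length := List.countP_le_length
      _ ≤ k := by rw [List.length_take]; omega
  have hsplit : l'.countP (fun x => decide (c ≤ x)) ≤ k := by
    conv_lhs => rw [← List.take_append_drop k l']
    rw [List.countP_append]
    omega
  omega

lemma countP_kthLargest (h : k < l.length) :
    k + 1 ≤ l.countP (fun x => decide (kthLargest k l ≤ x)) := by
  have hLL : (l.mergeSort (fun a b => decide (b ≤ a))).length = l.length :=
    List.length_mergeSort l
  set l' := l.mergeSort (fun a b => decide (b ≤ a)) with hl'
  have hlen : k < l'.length := by omega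
  have hkth : kthLargest k l = l'[k] := by
    unfold kthLargest; rw [List.getD_eq_getElem l' 0 hlen]
  rw [← ((List.mergeSort_perm l _).countP_eq _)]
  have hcount : (l'.take (k+1)).countP (fun x => decide (kthLargest k l ≤ x))
      = (l'.take (k+1)).length := by
    rw [List.countP_eq_length]
    intro a ha
    rw [List.mem_take_iff_getElem] at ha
    obtain ⟨i, hi, rfl⟩ := ha
    rw [lt_min_iff] at hi
    simp only [decide_eq_true_iff]
    rw [hkth]
    exact kth_sorted_le (kth_sorted l) (by omega) (by rw [List.length_mergeSort]; omega)
  have hlt : (l'.take (k+1)).length = k+1 := by rw [List.length_take]; omega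
  calc (k+1 : ℕ) = (l'.take (k+1)).countP _ := by rw [hcount, hlt]
    _ ≤ l'.countP _ := (List.take_sublist _ _).countP_le

end KthLargest
open Finset in
-- countP over List.range vs Finset card
lemma countP_list_range (n : ℕ) (p : ℕ → Prop) [DecidablePred p] :
    (List.range n).countP (fun a => decide (p a)) = ((Finset.range n).filter p).card := by
  induction n with
  | zero => simp
  | succ n ih =>
    rw [List.range_succ, List.countP_append, Finset.range_add_one, Finset.filter_insert]
    by_cases hp : p n
    · rw [if_pos hp, Finset.card_insert_of_notMem (by simp)]
      simp [hp, ih]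
    · rw [if_neg hp]
      simp [hp, ih]

/-- `m_t`: the `(k+1)`-th largest value among `‖g 0‖₂, …, ‖g t‖₂`. -/
noncomputable def topkThresh {d : ℕ} (g : ℕ → EuclideanSpace ℝ (Fin d)) (k t : ℕ) : ℝ :=
  kthLargest k ((List.range (t + 1)).map fun s => ‖g s‖)

section Thresh

variable {d : ℕ} (g : ℕ → EuclideanSpace ℝ (Fin d)) (k : ℕ)

lemma topkThresh_nonneg (t : ℕ) : 0 ≤ topkThresh g k t := by
  apply kthLargest_nonneg
  intro x hx
  rw [List.mem_map] at hx
  obtain ⟨s, _, rfl⟩ := hx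
  exact norm_nonneg _

open Classical in
lemma topkThresh_le {t : ℕ} {c : ℝ} (hc : 0 ≤ c)
    (h : ((Finset.range (t+1)).filter (fun u => c < ‖g u‖)).card ≤ k) :
    topkThresh g k t ≤ c := by
  apply kthLargest_le hc
  rw [List.countP_map]
  have : ((fun x => decide (c < x)) ∘ fun s => ‖g s‖) = fun u => decide (c < ‖g u‖) := rfl
  rw [this, countP_list_range (t+1) (fun u => c < ‖g u‖)]
  convert h using 2

open Classical in
lemma le_topkThresh {t : ℕ} {c : ℝ}
    (h : k + 1 ≤ ((Finset.range (t+1)).filter (fun u => c ≤ ‖g u‖)).card) :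
    c ≤ topkThresh g k t := by
  apply le_kthLargest
  rw [List.countP_map]
  have : ((fun x => decide (c ≤ x)) ∘ fun s => ‖g s‖) = fun u => decide (c ≤ ‖g u‖) := rfl
  rw [this, countP_list_range (t+1) (fun u => c ≤ ‖g u‖)]
  convert h using 2

open Classical in
lemma topkThresh_card {t : ℕ} (h : 0 < topkThresh g k t) :
    k + 1 ≤ ((Finset.range (t+1)).filter (fun u => topkThresh g k t ≤ ‖g u‖)).card := by
  have hlen : k < ((List.range (t + 1)).map fun s => ‖g s‖).length := by
    by_contra hk
    push_neg at hk
    rw [topkThresh, kthLargest_eq_zero hk] at h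
    exact lt_irrefl _ h
  have := countP_kthLargest hlen
  rw [List.countP_map] at this
  have heq : ((fun x => decide (kthLargest k ((List.range (t + 1)).map fun s => ‖g s‖) ≤ x))
      ∘ fun s => ‖g s‖) = fun u => decide (topkThresh g k t ≤ ‖g u‖) := rfl
  rw [heq, countP_list_range (t+1) (fun u => topkThresh g k t ≤ ‖g u‖)] at this
  convert this using 3

open Classical in
lemma le_topkThresh_of_subset {t : ℕ} (A : Finset ℕ) (hA : ∀ u ∈ A, u ≤ t)
    (hcard : k + 1 ≤ A.card) {c : ℝ} (hc : ∀ u ∈ A, c ≤ ‖g u‖) :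
    c ≤ topkThresh g k t := by
  apply le_topkThresh g k
  refine le_trans ?_ (Finset.card_le_card (show A ⊆ _ by
    intro u hu
    rw [Finset.mem_filter, Finset.mem_range]
    exact ⟨Nat.lt_succ_of_le (hA u hu), hc u hu⟩))
  exact hcard

lemma topkThresh_mono : Monotone (topkThresh g k) := by
  apply monotone_nat_of_le_succ
  intro t
  by_cases h : 0 < topkThresh g k t
  · have hcard := topkThresh_card g k h
    apply le_topkThresh g k
    refine le_trans hcard (Finset.card_le_card ?_)
    intro u hu
    rw [Finset.mem_filter, Finset.mem_range] at hu ⊢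
    exact ⟨by omega, hu.2⟩
  · push_neg at h
    exact le_trans (le_antisymm h (topkThresh_nonneg g k t)).le (topkThresh_nonneg g k (t+1))

end Thresh
section SortedList

-- sum of a list of reals as a sum of getD over range
lemma list_sum_getD (l : List ℝ) : l.sum = ∑ j ∈ Finset.range l.length, l.getD j 0 := by
  induction l with
  | nil => simp
  | cons a l ih =>
    rw [List.sum_cons, List.length_cons, Finset.sum_range_succ']
    simp only [List.getD_cons_succ, List.getD_cons_zero]
    rw [ih]
    ring

lemma exists_sorted_list (v : ℕ → ℝ) (R : Finset ℕ) :
    ∃ L : List ℕ, L.Nodup ∧ L.toFinset = R ∧ L.Pairwise (fun a b => v b ≤ v a) := by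
  induction R using Finset.strongInduction with
  | _ R ih =>
    rcases eq_or_ne R ∅ with rfl | hne
    · exact ⟨[], by simp⟩
    · obtain ⟨t0, ht0, hmax⟩ := Finset.exists_max_image R v (Finset.nonempty_of_ne_empty hne)
      obtain ⟨L', hnd, hfs, hsort⟩ := ih (R.erase t0) (Finset.erase_ssubset ht0)
      refine ⟨t0 :: L', ?_, ?_, ?_⟩
      · rw [List.nodup_cons]
        exact ⟨fun hmem => by
          rw [← List.mem_toFinset, hfs] at hmem
          exact (Finset.ne_of_mem_erase hmem) rfl, hnd⟩
      · rw [List.toFinset_cons, hfs, Finset.insert_erase ht0]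
      · rw [List.pairwise_cons]
        refine ⟨fun b hb => ?_, hsort⟩
        rw [← List.mem_toFinset, hfs] at hb
        exact hmax b (Finset.mem_of_mem_erase hb)

end SortedList

section Rejected

variable {d : ℕ}

lemma rejected_bounds (g : ℕ → EuclideanSpace ℝ (Fin d)) (k : ℕ) (R : Finset ℕ)
    (hrej : ∀ t ∈ R, 2 * topkThresh g k t < ‖g t‖)
    (G : ℝ) (hG0 : 0 ≤ G) (hG : ∀ t ∈ R, ‖g t‖ ≤ G) :
    (∑ t ∈ R, ‖g t‖) ≤ 2 * k * G ∧
      (∑ t ∈ R, ‖g t‖)^2 ≤ 4 * k * ∑ t ∈ R, ‖g t‖^2 := by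
  classical
  obtain ⟨L, hnd, hfs, hsort⟩ := exists_sorted_list (fun t => ‖g t‖) R
  set N := L.length with hN
  set zl := L.map (fun t => ‖g t‖) with hzl
  have hzlen : zl.length = N := by rw [hzl, List.length_map]
  set z : ℕ → ℝ := fun j => zl.getD j 0 with hz
  have hzget : ∀ (j : ℕ) (hj : j < N), z j = ‖g (L[j]'hj)‖ := by
    intro j hj
    rw [hz]
    simp only
    rw [List.getD_eq_getElem zl 0 (by omega)]
    simp [hzl]
  have hz0 : ∀ j, 0 ≤ z j := by
    intro j
    by_cases hj : j < N
    · rw [hzget j hj]; exact norm_nonneg _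
    · simp only [hz]; rw [List.getD_eq_default _ _ (by omega)]
  have hzG : ∀ j, z j ≤ G := by
    intro j
    by_cases hj : j < N
    · rw [hzget j hj]
      exact hG _ (by rw [← hfs]; exact List.mem_toFinset.2 (L.getElem_mem hj))
    · simp only [hz]; rw [List.getD_eq_default _ _ (by omega)]; exact hG0
  have hzsorted : ∀ i j : ℕ, i ≤ j → z j ≤ z i := by
    intro i j hij
    by_cases hj : j < N
    · have hi : i < N := by omega
      rw [hzget j hj, hzget i hi]
      rcases eq_or_lt_of_le hij with rfl | hlt
      · exact le_refl _
      · exact (List.pairwise_iff_get.1 hsort) ⟨i, hi⟩ ⟨j, hj⟩ hlt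
    · have : z j = 0 := by simp only [hz]; rw [List.getD_eq_default _ _ (by omega)]
      rw [this]; exact hz0 i
  -- the key halving property
  have hhalf : ∀ j, z (j + k) ≤ z j / 2 := by
    intro j
    by_cases hjk : j + k < N
    · -- window of k+1 entries at positions j..j+k
      set Wnd := (L.drop j).take (k+1) with hWnd
      have hsub : Wnd.Sublist L := (List.take_sublist _ _).trans (List.drop_sublist _ _)
      have hWlen : Wnd.length = k + 1 := by
        rw [hWnd, List.length_take, List.length_drop]; omega
      have hWnd_nd : Wnd.Nodup := hnd.sublist hsub
      have hWmem : ∀ u ∈ Wnd, ∃ i : ℕ, j ≤ i ∧ i ≤ j + k ∧ ∃ hi : i < N, u = L[i]'hi := by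
        intro u hu
        rw [hWnd, List.mem_take_iff_getElem] at hu
        obtain ⟨i, hi, hLu⟩ := hu
        rw [lt_min_iff] at hi
        have hlend : (L.drop j).length = N - j := by rw [List.length_drop]
        refine ⟨j + i, by omega, by omega, by omega, ?_⟩
        rw [← hLu, List.getElem_drop]
      have hWval : ∀ u ∈ Wnd, z (j+k) ≤ ‖g u‖ ∧ ‖g u‖ ≤ z j := by
        intro u hu
        obtain ⟨i, hji, hik, hi, rfl⟩ := hWmem u hu
        rw [← hzget i hi]
        exact ⟨hzsorted i (j+k) hik, hzsorted j i hji⟩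
      set A := Wnd.toFinset with hA
      have hAcard : A.card = k + 1 := by
        rw [hA, List.toFinset_card_of_nodup hWnd_nd, hWlen]
      have hAne : A.Nonempty := Finset.card_pos.1 (by omega)
      set tstar := A.max' hAne with htstar
      have htstarA : tstar ∈ A := A.max'_mem hAne
      have htstarR : tstar ∈ R := by
        rw [← hfs]
        exact List.mem_toFinset.2 (hsub.mem (List.mem_toFinset.1 htstarA))
      have hthresh : z (j + k) ≤ topkThresh g k tstar := by
        apply le_topkThresh_of_subset g k A (fun u hu => A.le_max' u hu) (by omega)
        intro u hu
        exact (hWval u (List.mem_toFinset.1 hu)).1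
      have hrejstar := hrej tstar htstarR
      have hub : ‖g tstar‖ ≤ z j := (hWval tstar (List.mem_toFinset.1 htstarA)).2
      linarith
    · have : z (j + k) = 0 := by simp only [hz]; rw [List.getD_eq_default _ _ (by omega)]
      rw [this]
      linarith [hz0 j]
  -- iterated halving
  have hiter : ∀ (i m : ℕ), z (m + i * k) ≤ z m / 2^i := by
    intro i
    induction i with
    | zero => intro m; simpa using le_refl (z m)
    | succ i ih =>
      intro m
      have h1 : z (m + (i+1) * k) = z ((m + i * k) + k) := by ring_nf
      rw [h1]
      calc z ((m + i*k) + k) ≤ z (m + i*k) / 2 := hhalf _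
        _ ≤ (z m / 2^i) / 2 := by linarith [ih m]
        _ = z m / 2^(i+1) := by ring
  -- sums over the list
  have hsumY : ∑ t ∈ R, ‖g t‖ = ∑ j ∈ Finset.range N, z j := by
    rw [← hfs, List.sum_toFinset _ hnd, ← hzl, list_sum_getD zl, hzlen]
  have hsumY2 : ∑ t ∈ R, ‖g t‖^2 = ∑ j ∈ Finset.range N, (z j)^2 := by
    rw [← hfs, List.sum_toFinset _ hnd, list_sum_getD (L.map fun t => ‖g t‖^2)]
    rw [List.length_map]
    apply Finset.sum_congr rfl
    intro j hj
    rw [Finset.mem_range] at hj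
    rw [List.getD_eq_getElem _ 0 (by rw [List.length_map]; omega), List.getElem_map,
      hzget j hj]
  rcases Nat.eq_zero_or_pos k with rfl | hk
  · -- k = 0 : all z are 0
    have hzzero : ∀ j, z j = 0 := by
      intro j
      have := hhalf j
      simp only [Nat.add_zero] at this
      have := hz0 j
      linarith
    have : ∑ t ∈ R, ‖g t‖ = 0 := by
      rw [hsumY]; exact Finset.sum_eq_zero (fun j _ => hzzero j)
    rw [this]
    constructor
    · simp
    · have h2 : ∀ t ∈ R, (0:ℝ) ≤ ‖g t‖^2 := fun t _ => sq_nonneg _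
      simpa using Finset.sum_nonneg h2
  · -- k ≥ 1
    set Z := ∑ m ∈ Finset.range k, z m with hZ
    have hZ0 : 0 ≤ Z := Finset.sum_nonneg (fun m _ => hz0 m)
    have hblocks : ∀ I : ℕ, ∑ j ∈ Finset.range (k * I), z j ≤ (2 - 2 * (1/2:ℝ)^I) * Z := by
      intro I
      induction I with
      | zero => simp
      | succ I ih =>
        have hkI : k * (I + 1) = k * I + k := by ring
        rw [hkI, Finset.sum_range_add]
        have hblock : ∑ m ∈ Finset.range k, z (k * I + m) ≤ (1/2:ℝ)^I * Z := by
          rw [hZ, Finset.mul_sum]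
          apply Finset.sum_le_sum
          intro m _
          have h1 : k * I + m = m + I * k := by ring
          rw [h1]
          calc z (m + I * k) ≤ z m / 2^I := hiter I m
            _ = (1/2:ℝ)^I * z m := by rw [div_eq_mul_inv, mul_comm, one_div, inv_pow]
        have hhalfI : (0:ℝ) ≤ (1/2:ℝ)^I := by positivity
        calc ∑ j ∈ Finset.range (k*I), z j + ∑ m ∈ Finset.range k, z (k * I + m)
            ≤ (2 - 2 * (1/2:ℝ)^I) * Z + (1/2:ℝ)^I * Z := by linarith
          _ = (2 - 2 * (1/2:ℝ)^(I+1)) * Z := by ring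
    have hYZ : ∑ j ∈ Finset.range N, z j ≤ 2 * Z := by
      have hNK : N ≤ k * N := Nat.le_mul_of_pos_left N hk
      have hmono : ∑ j ∈ Finset.range N, z j ≤ ∑ j ∈ Finset.range (k * N), z j := by
        apply Finset.sum_le_sum_of_subset_of_nonneg
        · exact Finset.range_subset_range.2 hNK
        · intro j _ _; exact hz0 j
      have h2 := hblocks N
      have : (2 - 2 * (1/2:ℝ)^N) * Z ≤ 2 * Z := by
        apply mul_le_mul_of_nonneg_right _ hZ0
        have : (0:ℝ) ≤ (1/2:ℝ)^N := by positivity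
        linarith
      linarith
    have hZkG : Z ≤ k * G := by
      rw [hZ]
      calc ∑ m ∈ Finset.range k, z m ≤ ∑ m ∈ Finset.range k, G :=
            Finset.sum_le_sum (fun m _ => hzG m)
        _ = k * G := by rw [Finset.sum_const, Finset.card_range, nsmul_eq_mul]
    have hZsq : Z^2 ≤ k * ∑ m ∈ Finset.range k, (z m)^2 := by
      have := Finset.sum_mul_sq_le_sq_mul_sq (Finset.range k) (fun _ => (1:ℝ)) z
      simpa [hZ, Finset.card_range] using this
    have hsqsub : ∑ m ∈ Finset.range k, (z m)^2 ≤ ∑ j ∈ Finset.range N, (z j)^2 := by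
      have h1 : ∑ m ∈ Finset.range k, (z m)^2 ≤ ∑ m ∈ Finset.range (max k N), (z m)^2 := by
        apply Finset.sum_le_sum_of_subset_of_nonneg
        · exact Finset.range_subset_range.2 (le_max_left _ _)
        · intro j _ _; exact sq_nonneg _
      have h2 : ∑ m ∈ Finset.range (max k N), (z m)^2 = ∑ j ∈ Finset.range N, (z j)^2 := by
        symm
        apply Finset.sum_subset (Finset.range_subset_range.2 (le_max_right _ _))
        intro j _ hj
        rw [Finset.mem_range] at hj
        push_neg at hj
        have : z j = 0 := by simp only [hz]; rw [List.getD_eq_default _ _ (by omega)]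
        rw [this]; ring
      exact h1.trans (le_of_eq h2)
    have hY0 : 0 ≤ ∑ j ∈ Finset.range N, z j := Finset.sum_nonneg (fun j _ => hz0 j)
    constructor
    · rw [hsumY]
      calc ∑ j ∈ Finset.range N, z j ≤ 2 * Z := hYZ
        _ ≤ 2 * ((k:ℝ) * G) := by linarith
        _ = 2 * k * G := by ring
    · rw [hsumY, hsumY2]
      have h4 : (∑ j ∈ Finset.range N, z j)^2 ≤ 4 * Z^2 := by nlinarith
      have h5 : (k:ℝ) * ∑ m ∈ Finset.range k, (z m)^2 ≤
          (k:ℝ) * ∑ j ∈ Finset.range N, (z j)^2 := by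
        apply mul_le_mul_of_nonneg_left hsqsub (by positivity)
      nlinarith
section Charge

open Classical in
/-- Abstract charging lemma: if for each `t` in `F` the number of elements of `F` at or
after `t` is at most the number of elements of `Sf` with value at least `μ t`, then the
sum of `μ t ^ 2` over `F` is at most the sum of values squared over `Sf`. -/
lemma charge_aux (v : ℕ → ℝ) (hv : ∀ u, 0 ≤ v u) (μ : ℕ → ℝ) (hμ0 : ∀ t, 0 ≤ μ t) :
    ∀ (n : ℕ) (F Sf : Finset ℕ), F.card = n →
    (∀ t ∈ F, (F.filter (fun t' => t ≤ t')).card ≤ (Sf.filter (fun u => μ t ≤ v u)).card) →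
    ∑ t ∈ F, (μ t)^2 ≤ ∑ u ∈ Sf, (v u)^2 := by
  intro n
  induction n with
  | zero =>
    intro F Sf hF _
    rw [Finset.card_eq_zero] at hF
    subst hF
    simpa using Finset.sum_nonneg (fun u _ => sq_nonneg (v u))
  | succ n ih =>
    intro F Sf hF hcard
    have hFne : F.Nonempty := Finset.card_pos.1 (by omega)
    set tstar := F.max' hFne with htstar
    have htF : tstar ∈ F := F.max'_mem hFne
    have h1 : 1 ≤ (Sf.filter (fun u => μ tstar ≤ v u)).card := by
      refine le_trans ?_ (hcard tstar htF)
      rw [Nat.one_le_iff_ne_zero, ← Nat.pos_iff_ne_zero, Finset.card_pos]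
      exact ⟨tstar, Finset.mem_filter.2 ⟨htF, le_refl _⟩⟩
    obtain ⟨ustar, hustar⟩ := Finset.card_pos.mp
      (show 0 < (Sf.filter (fun u => μ tstar ≤ v u)).card by omega)
    rw [Finset.mem_filter] at hustar
    obtain ⟨hustarS, hustarv⟩ := hustar
    have hIH := ih (F.erase tstar) (Sf.erase ustar) (by rw [Finset.card_erase_of_mem htF, hF]; omega)
    have hcard' : ∀ t ∈ F.erase tstar,
        ((F.erase tstar).filter (fun t' => t ≤ t')).card ≤
          ((Sf.erase ustar).filter (fun u => μ t ≤ v u)).card := by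
      intro t ht
      have htF' : t ∈ F := Finset.mem_of_mem_erase ht
      have hL : ((F.erase tstar).filter (fun t' => t ≤ t')).card =
          (F.filter (fun t' => t ≤ t')).card - 1 := by
        rw [Finset.filter_erase, Finset.card_erase_of_mem]
        exact Finset.mem_filter.2 ⟨htF, F.le_max' t htF'⟩
      have hR : (Sf.filter (fun u => μ t ≤ v u)).card - 1 ≤
          ((Sf.erase ustar).filter (fun u => μ t ≤ v u)).card := by
        rw [Finset.filter_erase]
        exact Finset.pred_card_le_card_erase
      have hmem : tstar ∈ F.filter (fun t' => t ≤ t') :=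
        Finset.mem_filter.2 ⟨htF, F.le_max' t htF'⟩
      have hpos : 1 ≤ (F.filter (fun t' => t ≤ t')).card :=
        Finset.card_pos.2 ⟨tstar, hmem⟩
      have := hcard t htF'
      omega
    calc ∑ t ∈ F, (μ t)^2 = ∑ t ∈ F.erase tstar, (μ t)^2 + (μ tstar)^2 :=
          (Finset.sum_erase_add F _ htF).symm
      _ ≤ ∑ u ∈ Sf.erase ustar, (v u)^2 + (v ustar)^2 := by
          have : (μ tstar)^2 ≤ (v ustar)^2 := by
            apply pow_le_pow_left₀ (hμ0 tstar) hustarv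
          linarith [hIH hcard']
      _ = ∑ u ∈ Sf, (v u)^2 := Finset.sum_erase_add Sf _ hustarS

end Charge
section Master

open Real

private lemma sqrt_four' : Real.sqrt 4 = 2 := by
  rw [show (4:ℝ) = 2^2 by norm_num, Real.sqrt_sq (by norm_num : (0:ℝ) ≤ 2)]

private lemma sqrt_4mul (s : ℝ) : Real.sqrt (4*s) = 2 * Real.sqrt s := by
  rw [Real.sqrt_mul (by norm_num : (0:ℝ) ≤ 4), sqrt_four']

/-- `√(x+A) - √(x+B)` is antitone in `x` (for `0 ≤ B ≤ A`). -/
private lemma sqrt_diff_mono {x₀ x A B : ℝ} (h0 : 0 ≤ x₀) (hx : x₀ ≤ x) (hB : 0 ≤ B)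
    (hAB : B ≤ A) :
    Real.sqrt (x + A) - Real.sqrt (x + B) ≤ Real.sqrt (x₀ + A) - Real.sqrt (x₀ + B) := by
  have hxA : (0:ℝ) ≤ x + A := by linarith
  have hxB : (0:ℝ) ≤ x + B := by linarith
  have hx0A : (0:ℝ) ≤ x₀ + A := by linarith
  have hx0B : (0:ℝ) ≤ x₀ + B := by linarith
  have hprod : Real.sqrt (x + A) * Real.sqrt (x₀ + B) ≤
      Real.sqrt (x₀ + A) * Real.sqrt (x + B) := by
    rw [← Real.sqrt_mul hxA, ← Real.sqrt_mul hx0A]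
    apply Real.sqrt_le_sqrt
    nlinarith
  nlinarith [Real.sq_sqrt hxA, Real.sq_sqrt hxB, Real.sq_sqrt hx0A, Real.sq_sqrt hx0B,
    Real.sqrt_nonneg (x + A), Real.sqrt_nonneg (x + B), Real.sqrt_nonneg (x₀ + A),
    Real.sqrt_nonneg (x₀ + B)]

private lemma key_ineq {k : ℕ} (hk : 1 ≤ k) {s r : ℝ} (hr : 0 ≤ r) (hrs : r ≤ s) :
    Real.sqrt ((k:ℝ) * r) + Real.sqrt (5*s - r) ≤ Real.sqrt ((k:ℝ) * s) + 2 * Real.sqrt s := by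
  have hs : (0:ℝ) ≤ s := le_trans hr hrs
  have hk0 : (0:ℝ) ≤ (k:ℝ) := by positivity
  set A := Real.sqrt s with hA
  set B := Real.sqrt r with hB
  set C := Real.sqrt (5*s - r) with hC
  set K := Real.sqrt (k:ℝ) with hK
  have hA2 : A^2 = s := Real.sq_sqrt hs
  have hB2 : B^2 = r := Real.sq_sqrt hr
  have hC2 : C^2 = 5*s - r := Real.sq_sqrt (by linarith)
  have hK2 : K^2 = (k:ℝ) := Real.sq_sqrt hk0
  have hA0 : 0 ≤ A := Real.sqrt_nonneg _
  have hB0 : 0 ≤ B := Real.sqrt_nonneg _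
  have hC0 : 0 ≤ C := Real.sqrt_nonneg _
  have hK1 : 1 ≤ K := by
    rw [hK, show (1:ℝ) = Real.sqrt 1 from (Real.sqrt_one).symm]
    exact Real.sqrt_le_sqrt (by exact_mod_cast hk)
  have hBA : B ≤ A := Real.sqrt_le_sqrt hrs
  have hC2A : 2*A ≤ C := by
    rw [hC, hA, ← sqrt_4mul]
    exact Real.sqrt_le_sqrt (by linarith)
  have hKB : Real.sqrt ((k:ℝ) * r) = K * B := Real.sqrt_mul hk0 r
  have hKA : Real.sqrt ((k:ℝ) * s) = K * A := Real.sqrt_mul hk0 s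
  rw [hKB, hKA]
  rcases eq_or_lt_of_le hA0 with hA0' | hApos
  · -- A = 0 : s = 0, so r = 0, C = 0, B = 0
    have hs0 : s = 0 := by rw [← hA2, ← hA0']; ring
    have hr0 : r = 0 := le_antisymm (by linarith) hr
    have hB0' : B = 0 := by rw [hB, hr0, Real.sqrt_zero]
    have hC0' : C = 0 := by rw [hC, hs0, hr0]; norm_num
    rw [← hA0', hB0', hC0']
    norm_num
  · have h1 : (C - 2*A)*(C + 2*A) = (A - B)*(A + B) := by nlinarith
    have h2 : (A - B)*(A + B) ≤ (A - B)*(C + 2*A) := by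
      apply mul_le_mul_of_nonneg_left _ (by linarith)
      linarith
    have hpos : 0 < C + 2*A := by linarith
    have h3 : C - 2*A ≤ A - B := le_of_mul_le_mul_right (by nlinarith) hpos
    nlinarith [mul_nonneg (by linarith : (0:ℝ) ≤ K - 1) (by linarith : (0:ℝ) ≤ A - B)]

/-- The master real-arithmetic inequality combining all the combinatorial bounds. -/
lemma master_ineq (k : ℕ) (G X Y Q s x r : ℝ)
    (hG : 0 ≤ G) (hX0 : 0 ≤ X) (hY0 : 0 ≤ Y) (hQ0 : 0 ≤ Q) (hs0 : 0 ≤ s)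
    (hx : 0 ≤ x) (hr : 0 ≤ r)
    (hX : X ≤ 2*k*G) (hY : Y ≤ 2*k*G) (hY2 : Y^2 ≤ 4*k*r) (hQ : Q ≤ 4*s)
    (hsk : s ≤ k*G^2) (hsa : s ≤ x + r) :
    X + Y + 2*Real.sqrt (x + Q) ≤ 2*Real.sqrt (x + r) + 2*G*(2*k + Real.sqrt k + 2) := by
  have hk0 : (0:ℝ) ≤ (k:ℝ) := by positivity
  have hsqrtk : 0 ≤ Real.sqrt (k:ℝ) := Real.sqrt_nonneg _
  have hGsk : Real.sqrt s ≤ Real.sqrt (k:ℝ) * G := by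
    calc Real.sqrt s ≤ Real.sqrt ((k:ℝ)*G^2) := Real.sqrt_le_sqrt hsk
      _ = Real.sqrt (k:ℝ) * G := by
          rw [Real.sqrt_mul hk0, Real.sqrt_sq hG]
  have hexp : 2*G*(2*(k:ℝ) + Real.sqrt k + 2) = 4*k*G + 2*G*Real.sqrt k + 4*G := by ring
  by_cases hQr : Q ≤ r
  · have h1 : Real.sqrt (x + Q) ≤ Real.sqrt (x + r) := Real.sqrt_le_sqrt (by linarith)
    nlinarith [mul_nonneg hG hsqrtk]
  · push_neg at hQr
    have hr4s : r < 4*s := lt_of_lt_of_le hQr hQ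
    have hmono1 : Real.sqrt (x + Q) ≤ Real.sqrt (x + 4*s) := Real.sqrt_le_sqrt (by linarith)
    by_cases hsr : s ≤ r
    · -- s ≤ r < 4s
      have h2 : Real.sqrt (x + 4*s) - Real.sqrt (x + r) ≤
          Real.sqrt (0 + 4*s) - Real.sqrt (0 + r) :=
        sqrt_diff_mono (le_refl 0) hx hr (by linarith)
      have h3 : Real.sqrt (0 + 4*s) = 2*Real.sqrt s := by rw [zero_add, sqrt_4mul]
      have h4 : Real.sqrt s ≤ Real.sqrt (0 + r) := by
        rw [zero_add]; exact Real.sqrt_le_sqrt hsr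
      have h5 : Real.sqrt (x + 4*s) - Real.sqrt (x + r) ≤ Real.sqrt s := by
        rw [h3] at h2; linarith
      nlinarith [mul_nonneg hG hsqrtk]
    · push_neg at hsr
      -- r < s
      have hk1 : 1 ≤ k := by
        by_contra hk'
        push_neg at hk'
        interval_cases k
        simp only [Nat.cast_zero, zero_mul] at hsk
        nlinarith
      have hx0 : 0 ≤ s - r := by linarith
      have hxs : s - r ≤ x := by linarith
      have h2 : Real.sqrt (x + 4*s) - Real.sqrt (x + r) ≤
          Real.sqrt ((s-r) + 4*s) - Real.sqrt ((s-r) + r) :=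
        sqrt_diff_mono hx0 hxs hr (by linarith)
      have h3 : (s-r) + 4*s = 5*s - r := by ring
      have h4 : (s-r) + r = s := by ring
      rw [h3, h4] at h2
      have hYr : Y ≤ 2 * Real.sqrt ((k:ℝ)*r) := by
        have h5 : Y = Real.sqrt (Y^2) := (Real.sqrt_sq hY0).symm
        rw [h5]
        calc Real.sqrt (Y^2) ≤ Real.sqrt (4*((k:ℝ)*r)) := by
              apply Real.sqrt_le_sqrt; push_cast; linarith
          _ = 2 * Real.sqrt ((k:ℝ)*r) := sqrt_4mul _
      have hkey := key_ineq hk1 hr (le_of_lt hsr)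
      have hks : Real.sqrt ((k:ℝ)*s) ≤ (k:ℝ) * G := by
        calc Real.sqrt ((k:ℝ)*s) ≤ Real.sqrt ((k:ℝ)*((k:ℝ)*G^2)) :=
              Real.sqrt_le_sqrt (by nlinarith)
          _ = (k:ℝ)*G := by
              rw [show (k:ℝ)*((k:ℝ)*G^2) = ((k:ℝ)*G)^2 by ring,
                Real.sqrt_sq (by positivity)]
      nlinarith [Real.sqrt_nonneg ((k:ℝ)*r), Real.sqrt_nonneg s]
end Master
/-- The set of rounds in `{0, …, T-1}` passed on to ALG by the Top-k Filter. -/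
noncomputable def topkPassed {d : ℕ} (g : ℕ → EuclideanSpace ℝ (Fin d)) (k T : ℕ) :
    Finset ℕ :=
  (Finset.range T).filter fun t => ‖g t‖ ≤ 2 * topkThresh g k t

/-- `G(S) = max_{t ∈ S} ‖g t‖₂` (with `G(∅) = 0`). -/
noncomputable def gradMax {d : ℕ} (g : ℕ → EuclideanSpace ℝ (Fin d)) (S : Finset ℕ) : ℝ :=
  ((S.sup fun t => ‖g t‖₊ : NNReal) : ℝ)

set_option maxHeartbeats 1000000 in
/-- Corollary 1, General Convex Losses: if the predictions satisfy the
adaptive OGD guarantee on the rounds passed by the Top-k Filter, then the robust regret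
on any `S` with at most `k` outliers is at most
`2D √(Σ_{t∈S} ‖g t‖²) + 2D G(S)(2k + √k + 2) ≤ 2D G(S)(√T + 2k + √k + 2)`. -/
theorem topk_filter_general_convex
    {d : ℕ} (W : Set (EuclideanSpace ℝ (Fin d)))
    (hWne : W.Nonempty) (hWcomp : IsCompact W) (hWconv : Convex ℝ W)
    (D : ℝ) (hD : D = Metric.diam W)
    (T k : ℕ) (hT : 1 ≤ T)
    (f : ℕ → EuclideanSpace ℝ (Fin d) → ℝ)
    (hconv : ∀ t ∈ Finset.range T, ConvexOn ℝ W (f t))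
    (w : ℕ → EuclideanSpace ℝ (Fin d)) (hw : ∀ t ∈ Finset.range T, w t ∈ W)
    (g : ℕ → EuclideanSpace ℝ (Fin d))
    (hsub : ∀ t ∈ Finset.range T, ∀ y ∈ W, f t (w t) + (inner ℝ (y - w t) (g t) : ℝ) ≤ f t y)
    (hOGD : ∀ u ∈ W, ∑ t ∈ topkPassed g k T, (inner ℝ (w t - u) (g t) : ℝ) ≤
      2 * D * Real.sqrt (∑ t ∈ topkPassed g k T, ‖g t‖ ^ 2))
    (S : Finset ℕ) (hS : S ⊆ Finset.range T) (hSk : T - S.card ≤ k)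
    (u : EuclideanSpace ℝ (Fin d)) (hu : u ∈ W) :
    ∑ t ∈ S, (f t (w t) - f t u) ≤
        2 * D * Real.sqrt (∑ t ∈ S, ‖g t‖ ^ 2)
          + 2 * D * gradMax g S * (2 * k + Real.sqrt k + 2) ∧
      2 * D * Real.sqrt (∑ t ∈ S, ‖g t‖ ^ 2)
          + 2 * D * gradMax g S * (2 * k + Real.sqrt k + 2) ≤
        2 * D * gradMax g S * (Real.sqrt T + 2 * k + Real.sqrt k + 2) := by
  classical
  set P := topkPassed g k T with hP
  set Gv := gradMax g S with hGv
  set PS := P \ S with hPS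
  set SP := S \ P with hSP
  set out := Finset.range T \ S with hout_def
  -- basic facts
  have hD0 : 0 ≤ D := hD ▸ Metric.diam_nonneg
  have hG0 : 0 ≤ Gv := NNReal.coe_nonneg _
  have hGmem : ∀ t ∈ S, ‖g t‖ ≤ Gv := by
    intro t ht
    have h1 : ‖g t‖₊ ≤ S.sup (fun t => ‖g t‖₊) := Finset.le_sup (f := fun t => ‖g t‖₊) ht
    calc ‖g t‖ = ((‖g t‖₊ : NNReal) : ℝ) := (coe_nnnorm _).symm
      _ ≤ Gv := NNReal.coe_le_coe.2 h1
  have hPsub : P ⊆ Finset.range T := Finset.filter_subset _ _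
  have hout_card : out.card ≤ k := by
    rw [hout_def, Finset.card_sdiff_of_subset hS, Finset.card_range]
    exact hSk
  have hPS_out : PS ⊆ out := by
    intro t ht
    rw [hPS, Finset.mem_sdiff] at ht
    rw [hout_def, Finset.mem_sdiff]
    exact ⟨hPsub ht.1, ht.2⟩
  have hPS_k : PS.card ≤ k := le_trans (Finset.card_le_card hPS_out) hout_card
  have hμG : ∀ t ∈ Finset.range T, topkThresh g k t ≤ Gv := by
    intro t ht
    rw [Finset.mem_range] at ht
    apply topkThresh_le g k hG0
    refine le_trans (Finset.card_le_card ?_) hout_card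
    intro v hv
    rw [Finset.mem_filter, Finset.mem_range] at hv
    rw [hout_def, Finset.mem_sdiff, Finset.mem_range]
    refine ⟨by omega, fun hvS => ?_⟩
    exact absurd (hGmem v hvS) (not_le.2 hv.2)
  have hpass : ∀ t ∈ P, ‖g t‖ ≤ 2 * topkThresh g k t := by
    intro t ht
    rw [hP, topkPassed, Finset.mem_filter] at ht
    exact ht.2
  have hμ0 : ∀ t, 0 ≤ topkThresh g k t := topkThresh_nonneg g k
  -- the aggregate quantities
  set X := ∑ t ∈ PS, ‖g t‖ with hX
  set Y := ∑ t ∈ SP, ‖g t‖ with hY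
  set Q := ∑ t ∈ PS, ‖g t‖^2 with hQ
  set s := ∑ t ∈ PS, (topkThresh g k t)^2 with hs
  set x := ∑ t ∈ S ∩ P, ‖g t‖^2 with hx
  set r := ∑ t ∈ SP, ‖g t‖^2 with hr
  have hX0 : 0 ≤ X := Finset.sum_nonneg (fun t _ => norm_nonneg _)
  have hY0 : 0 ≤ Y := Finset.sum_nonneg (fun t _ => norm_nonneg _)
  have hQ0 : 0 ≤ Q := Finset.sum_nonneg (fun t _ => sq_nonneg _)
  have hs0 : 0 ≤ s := Finset.sum_nonneg (fun t _ => sq_nonneg _)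
  have hx0 : 0 ≤ x := Finset.sum_nonneg (fun t _ => sq_nonneg _)
  have hr0 : 0 ≤ r := Finset.sum_nonneg (fun t _ => sq_nonneg _)
  -- X ≤ 2kG
  have hXb : X ≤ 2*k*Gv := by
    have h1 : ∀ t ∈ PS, ‖g t‖ ≤ 2*Gv := by
      intro t ht
      have htP : t ∈ P := (Finset.mem_sdiff.1 ht).1
      have htT : t ∈ Finset.range T := hPsub htP
      calc ‖g t‖ ≤ 2 * topkThresh g k t := hpass t htP
        _ ≤ 2 * Gv := by linarith [hμG t htT]
    calc X ≤ ∑ t ∈ PS, 2*Gv := Finset.sum_le_sum h1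
      _ = PS.card * (2*Gv) := by rw [Finset.sum_const, nsmul_eq_mul]
      _ ≤ k * (2*Gv) :=
          mul_le_mul_of_nonneg_right (by exact_mod_cast hPS_k) (by positivity)
      _ = 2*k*Gv := by ring
  -- Q ≤ 4s
  have hQb : Q ≤ 4*s := by
    rw [hQ, hs, Finset.mul_sum]
    apply Finset.sum_le_sum
    intro t ht
    have htP : t ∈ P := (Finset.mem_sdiff.1 ht).1
    have h1 := hpass t htP
    nlinarith [norm_nonneg (g t), hμ0 t]
  -- s ≤ k G²
  have hskb : s ≤ k*Gv^2 := by
    have h1 : ∀ t ∈ PS, (topkThresh g k t)^2 ≤ Gv^2 := by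
      intro t ht
      have htT : t ∈ Finset.range T := hPsub (Finset.mem_sdiff.1 ht).1
      nlinarith [hμG t htT, hμ0 t]
    calc s ≤ ∑ t ∈ PS, Gv^2 := Finset.sum_le_sum h1
      _ = PS.card * Gv^2 := by rw [Finset.sum_const, nsmul_eq_mul]
      _ ≤ k * Gv^2 :=
          mul_le_mul_of_nonneg_right (by exact_mod_cast hPS_k) (sq_nonneg _)
  -- sum splits
  have hsplitS : x + r = ∑ t ∈ S, ‖g t‖^2 := by
    rw [hx, hr, hSP, ← Finset.filter_mem_eq_inter, Finset.sdiff_eq_filter]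
    exact Finset.sum_filter_add_sum_filter_not S (fun t => t ∈ P) _
  have hsplitP : ∑ t ∈ P, ‖g t‖^2 = x + Q := by
    have h1 : ∑ t ∈ P ∩ S, ‖g t‖^2 + ∑ t ∈ P \ S, ‖g t‖^2 = ∑ t ∈ P, ‖g t‖^2 := by
      rw [← Finset.filter_mem_eq_inter, Finset.sdiff_eq_filter]
      exact Finset.sum_filter_add_sum_filter_not P (fun t => t ∈ S) _
    rw [← h1, Finset.inter_comm]
  -- s ≤ x + r  (the charging argument)
  have hsa : s ≤ x + r := by
    rw [hsplitS]
    set F := PS.filter (fun t => 0 < topkThresh g k t) with hF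
    have hcharge := charge_aux (fun u => ‖g u‖) (fun u => norm_nonneg _)
      (fun t => topkThresh g k t) hμ0 F.card F S rfl ?_
    · have hzero : ∑ t ∈ PS.filter (fun t => ¬ 0 < topkThresh g k t),
          (topkThresh g k t)^2 = 0 := by
        apply Finset.sum_eq_zero
        intro t ht
        have h1 := (Finset.mem_filter.1 ht).2
        push_neg at h1
        have h2 : topkThresh g k t = 0 := le_antisymm h1 (hμ0 t)
        rw [h2]; ring
      have hsum : s = ∑ t ∈ F, (topkThresh g k t)^2 := by
        rw [hs, ← Finset.sum_filter_add_sum_filter_not PS (fun t => 0 < topkThresh g k t),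
          hzero, add_zero]
      rw [hsum]
      exact hcharge
    · -- the cardinality condition
      intro t ht
      rw [hF, Finset.mem_filter] at ht
      obtain ⟨htPS, htpos⟩ := ht
      have htP : t ∈ P := (Finset.mem_sdiff.1 htPS).1
      have htT : t < T := Finset.mem_range.1 (hPsub htP)
      set A := (Finset.range (t+1)).filter (fun v => topkThresh g k t ≤ ‖g v‖) with hA
      have hAcard : k + 1 ≤ A.card := topkThresh_card g k htpos
      have hsplitA : (A ∩ S).card + (A \ S).card = A.card :=
        Finset.card_inter_add_card_sdiff A S
      have hAnS : (A \ S).card ≤ (out ∩ Finset.range (t+1)).card := by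
        apply Finset.card_le_card
        intro v hv
        rw [Finset.mem_sdiff, hA, Finset.mem_filter, Finset.mem_range] at hv
        rw [Finset.mem_inter, hout_def, Finset.mem_sdiff, Finset.mem_range, Finset.mem_range]
        exact ⟨⟨by omega, hv.2⟩, by omega⟩
      have hunion : (F.filter (fun t' => t ≤ t')).card +
          (out ∩ Finset.range (t+1)).card ≤ k + 1 := by
        have h1 := Finset.card_union_add_card_inter (F.filter (fun t' => t ≤ t'))
          (out ∩ Finset.range (t+1))
        have h2 : (F.filter (fun t' => t ≤ t')) ∪ (out ∩ Finset.range (t+1)) ⊆ out := by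
          intro v hv
          rcases Finset.mem_union.1 hv with hv1 | hv2
          · have : v ∈ F := Finset.mem_of_mem_filter _ hv1
            rw [hF] at this
            exact hPS_out (Finset.mem_of_mem_filter _ this)
          · exact (Finset.mem_inter.1 hv2).1
        have h3 : (F.filter (fun t' => t ≤ t')) ∩ (out ∩ Finset.range (t+1)) ⊆ {t} := by
          intro v hv
          rw [Finset.mem_inter] at hv
          have hv1 := (Finset.mem_filter.1 hv.1).2
          have hv2 := Finset.mem_range.1 (Finset.mem_inter.1 hv.2).2
          rw [Finset.mem_singleton]
          omega
        have h4 := Finset.card_le_card h2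
        have h5 := Finset.card_le_card h3
        rw [Finset.card_singleton] at h5
        omega
      have hASsub : A ∩ S ⊆ S.filter (fun v => topkThresh g k t ≤ ‖g v‖) := by
        intro v hv
        rw [Finset.mem_inter, hA, Finset.mem_filter] at hv
        exact Finset.mem_filter.2 ⟨hv.2, hv.1.2⟩
      have h6 := Finset.card_le_card hASsub
      show (F.filter (fun t' => t ≤ t')).card ≤
        (S.filter (fun v => topkThresh g k t ≤ ‖g v‖)).card
      omega
  -- Y bounds (the halving argument)
  have hrejSP : ∀ t ∈ SP, 2 * topkThresh g k t < ‖g t‖ := by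
    intro t ht
    rw [hSP, Finset.mem_sdiff] at ht
    have htT : t ∈ Finset.range T := hS ht.1
    have h1 : ¬ (‖g t‖ ≤ 2 * topkThresh g k t) := by
      intro hcon
      exact ht.2 (Finset.mem_filter.2 ⟨htT, hcon⟩)
    linarith [not_le.1 h1]
  have hGSP : ∀ t ∈ SP, ‖g t‖ ≤ Gv := fun t ht => hGmem t (Finset.mem_sdiff.1 ht).1
  obtain ⟨hYb, hY2b⟩ := rejected_bounds g k SP hrejSP Gv hG0 hGSP
  -- master inequality
  have hmaster := master_ineq k Gv X Y Q s x r hG0 hX0 hY0 hQ0 hs0 hx0 hr0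
    hXb hYb hY2b hQb hskb hsa
  -- the regret chain
  have hinner_ub : ∀ t ∈ Finset.range T, (inner ℝ (w t - u) (g t) : ℝ) ≤ D * ‖g t‖ := by
    intro t ht
    have h1 : (inner ℝ (w t - u) (g t) : ℝ) ≤ ‖w t - u‖ * ‖g t‖ := real_inner_le_norm _ _
    have h2 : ‖w t - u‖ ≤ D := by
      rw [← dist_eq_norm, hD]
      exact Metric.dist_le_diam_of_mem hWcomp.isBounded (hw t ht) hu
    calc (inner ℝ (w t - u) (g t) : ℝ) ≤ ‖w t - u‖ * ‖g t‖ := h1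
      _ ≤ D * ‖g t‖ := mul_le_mul_of_nonneg_right h2 (norm_nonneg _)
  have hinner_lb : ∀ t ∈ Finset.range T, -(D * ‖g t‖) ≤ (inner ℝ (w t - u) (g t) : ℝ) := by
    intro t ht
    have h1 : (inner ℝ (u - w t) (g t) : ℝ) ≤ ‖u - w t‖ * ‖g t‖ := real_inner_le_norm _ _
    have hneg : (inner ℝ (u - w t) (g t) : ℝ) = - (inner ℝ (w t - u) (g t) : ℝ) := by
      rw [← neg_sub (w t) u, inner_neg_left]
    have h2 : ‖u - w t‖ ≤ D := by
      rw [← dist_eq_norm, hD]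
      exact Metric.dist_le_diam_of_mem hWcomp.isBounded hu (hw t ht)
    have h3 : ‖u - w t‖ * ‖g t‖ ≤ D * ‖g t‖ := mul_le_mul_of_nonneg_right h2 (norm_nonneg _)
    rw [hneg] at h1
    linarith
  have hregret1 : ∑ t ∈ S, (f t (w t) - f t u) ≤ ∑ t ∈ S, (inner ℝ (w t - u) (g t) : ℝ) := by
    apply Finset.sum_le_sum
    intro t ht
    have h1 := hsub t (hS ht) u hu
    have hneg : (inner ℝ (u - w t) (g t) : ℝ) = - (inner ℝ (w t - u) (g t) : ℝ) := by
      rw [← neg_sub (w t) u, inner_neg_left]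
    rw [hneg] at h1
    linarith
  have hsplitSinner : ∑ t ∈ S, (inner ℝ (w t - u) (g t) : ℝ) =
      (∑ t ∈ S ∩ P, (inner ℝ (w t - u) (g t) : ℝ)) + ∑ t ∈ SP, (inner ℝ (w t - u) (g t) : ℝ) := by
    rw [hSP, ← Finset.filter_mem_eq_inter, Finset.sdiff_eq_filter]
    exact (Finset.sum_filter_add_sum_filter_not S (fun t => t ∈ P) _).symm
  have hsplitPinner : ∑ t ∈ S ∩ P, (inner ℝ (w t - u) (g t) : ℝ) =
      (∑ t ∈ P, (inner ℝ (w t - u) (g t) : ℝ)) - ∑ t ∈ PS, (inner ℝ (w t - u) (g t) : ℝ) := by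
    have h1 : ∑ t ∈ P ∩ S, (inner ℝ (w t - u) (g t) : ℝ) +
        ∑ t ∈ P \ S, (inner ℝ (w t - u) (g t) : ℝ) =
        ∑ t ∈ P, (inner ℝ (w t - u) (g t) : ℝ) := by
      rw [← Finset.filter_mem_eq_inter, Finset.sdiff_eq_filter]
      exact Finset.sum_filter_add_sum_filter_not P (fun t => t ∈ S) _
    rw [Finset.inter_comm] at h1
    rw [hPS]
    linarith
  have hSPb : ∑ t ∈ SP, (inner ℝ (w t - u) (g t) : ℝ) ≤ D * Y := by
    rw [hY, Finset.mul_sum]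
    apply Finset.sum_le_sum
    intro t ht
    have htT : t ∈ Finset.range T := hS (Finset.mem_sdiff.1 ht).1
    exact hinner_ub t htT
  have hPSb : - ∑ t ∈ PS, (inner ℝ (w t - u) (g t) : ℝ) ≤ D * X := by
    rw [hX, Finset.mul_sum, ← Finset.sum_neg_distrib]
    apply Finset.sum_le_sum
    intro t ht
    have htT : t ∈ Finset.range T := hPsub (Finset.mem_sdiff.1 ht).1
    linarith [hinner_lb t htT]
  have hOGDb := hOGD u hu
  rw [hsplitP] at hOGDb
  have htotal : ∑ t ∈ S, (f t (w t) - f t u) ≤ 2*D*Real.sqrt (x + Q) + D*X + D*Y := by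
    calc ∑ t ∈ S, (f t (w t) - f t u) ≤ ∑ t ∈ S, (inner ℝ (w t - u) (g t) : ℝ) := hregret1
      _ = (∑ t ∈ P, (inner ℝ (w t - u) (g t) : ℝ)) -
          (∑ t ∈ PS, (inner ℝ (w t - u) (g t) : ℝ)) +
          ∑ t ∈ SP, (inner ℝ (w t - u) (g t) : ℝ) := by rw [hsplitSinner, hsplitPinner]
      _ ≤ 2*D*Real.sqrt (x + Q) + D*X + D*Y := by linarith [hOGDb, hSPb, hPSb]
  constructor
  · -- first inequality
    have hmul := mul_le_mul_of_nonneg_left hmaster hD0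
    have hsq : Real.sqrt (x + r) = Real.sqrt (∑ t ∈ S, ‖g t‖^2) := by rw [hsplitS]
    calc ∑ t ∈ S, (f t (w t) - f t u) ≤ 2*D*Real.sqrt (x + Q) + D*X + D*Y := htotal
      _ = D * (X + Y + 2*Real.sqrt (x + Q)) := by ring
      _ ≤ D * (2*Real.sqrt (x + r) + 2*Gv*(2*k + Real.sqrt k + 2)) := hmul
      _ = 2*D*Real.sqrt (x+r) + 2*D*Gv*(2*k + Real.sqrt k + 2) := by ring
      _ = 2*D*Real.sqrt (∑ t ∈ S, ‖g t‖^2) + 2*D*Gv*(2*k + Real.sqrt k + 2) := by rw [hsq]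
  · -- second inequality
    have haT : ∑ t ∈ S, ‖g t‖^2 ≤ (T:ℝ)*Gv^2 := by
      have h1 : ∀ t ∈ S, ‖g t‖^2 ≤ Gv^2 := by
        intro t ht
        exact pow_le_pow_left₀ (norm_nonneg _) (hGmem t ht) 2
      calc ∑ t ∈ S, ‖g t‖^2 ≤ ∑ t ∈ S, Gv^2 := Finset.sum_le_sum h1
        _ = S.card * Gv^2 := by rw [Finset.sum_const, nsmul_eq_mul]
        _ ≤ T * Gv^2 := by
            apply mul_le_mul_of_nonneg_right _ (sq_nonneg _)
            have := Finset.card_le_card hS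
            rw [Finset.card_range] at this
            exact_mod_cast this
    have hsqT : Real.sqrt (∑ t ∈ S, ‖g t‖^2) ≤ Real.sqrt (T:ℝ) * Gv := by
      calc Real.sqrt (∑ t ∈ S, ‖g t‖^2) ≤ Real.sqrt ((T:ℝ)*Gv^2) := Real.sqrt_le_sqrt haT
        _ = Real.sqrt (T:ℝ) * Gv := by
            rw [Real.sqrt_mul (by positivity), Real.sqrt_sq hG0]
    have h2 : 2*D*Real.sqrt (∑ t ∈ S, ‖g t‖^2) ≤ 2*D*(Real.sqrt (T:ℝ) * Gv) := by
      apply mul_le_mul_of_nonneg_left hsqT (by positivity)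
    have h3 : 2*D*(Real.sqrt (T:ℝ) * Gv) = 2*D*Gv*Real.sqrt (T:ℝ) := by ring
    have hexpand : 2*D*Gv*(Real.sqrt T + 2*k + Real.sqrt k + 2) =
        2*D*Gv*Real.sqrt (T:ℝ) + 2*D*Gv*(2*k + Real.sqrt k + 2) := by ring
    linarith
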